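/- arXiv:1703.00575 — 2 statements merged into one kernel-verified Lean document; each statement's English description precedes it below -/
import Mathlib

section
/- With B = 2 and the recurrence C_1 = s_1, C_2 = s_1 + s_2, C_i = max(C_{i-2} + U, C_{i-1}) + s_i for i > 2 (unit interval length U ≥ 1): if s_1 = 0, s_{2i} = a_{[2i]} and s_{2i+1} = a_{[2i+1]} where partial sums satisfy ∑_{j=1}^i a_{[2j]} ≤ ∑_{j=1}^i a_{[2j-1]} ≤ U for all i ≤ m, then for all 1 ≤ i ≤ m: C_{2i} = (i-1)U + ∑_{j=1}^{i} a_{[2j-1]} and C_{2i+1} = iU + ∑_{j=1}^{i} a_{[2j]}. -/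
theorem stmt_7 (m : ℕ) (hm : 1 ≤ m) (U : ℝ) (hU : 1 ≤ U)
    (a : ℕ → ℝ) (ha : ∀ j, 0 ≤ a j) (s : ℕ → ℝ) (C : ℕ → ℝ)
    (hs1 : s 1 = 0)
    (hseven : ∀ i, 1 ≤ i → i ≤ m → s (2 * i) = a (2 * i - 1))
    (hsodd : ∀ i, 1 ≤ i → i ≤ m → s (2 * i + 1) = a (2 * i))
    (hC1 : C 1 = s 1) (hC2 : C 2 = s 1 + s 2)
    (hrec : ∀ i, 2 < i → i ≤ 2 * m + 1 → C i = max (C (i - 2) + U) (C (i - 1)) + s i)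
    (hpartial : ∀ i, 1 ≤ i → i ≤ m →
      ∑ j ∈ Finset.Icc 1 i, a (2 * j) ≤ ∑ j ∈ Finset.Icc 1 i, a (2 * j - 1) ∧
      ∑ j ∈ Finset.Icc 1 i, a (2 * j - 1) ≤ U) :
    ∀ i, 1 ≤ i → i ≤ m →
      C (2 * i) = ((i : ℝ) - 1) * U + ∑ j ∈ Finset.Icc 1 i, a (2 * j - 1) ∧
      C (2 * i + 1) = (i : ℝ) * U + ∑ j ∈ Finset.Icc 1 i, a (2 * j) := by
  intro i hi him
  induction i, hi using Nat.le_induction with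
  | base =>
    have h1 := hpartial 1 le_rfl hm
    simp only [Finset.Icc_self, Finset.sum_singleton] at h1 ⊢
    norm_num at h1 ⊢
    have hs2 : s 2 = a 1 := by have := hseven 1 le_rfl hm; norm_num at this; exact this
    have hs3 : s 3 = a 2 := by have := hsodd 1 le_rfl hm; norm_num at this; exact this
    have h3 : C 3 = max (C 1 + U) (C 2) + s 3 := by
      have := hrec 3 (by norm_num) (by omega); norm_num at this; exact this
    constructor
    · rw [hC2, hs1, hs2]; ring
    · rw [h3, hC1, hC2, hs1, hs2, hs3]
      rw [max_eq_left (by linarith [h1.2])]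
      ring
  | succ i hi ih =>
    obtain ⟨ih1, ih2⟩ := ih (by omega)
    have hpi := hpartial i hi (by omega)
    have hpi1 := hpartial (i + 1) (by omega) him
    have hso : ∑ j ∈ Finset.Icc 1 (i+1), a (2*j-1)
        = (∑ j ∈ Finset.Icc 1 i, a (2*j-1)) + a (2*(i+1)-1) :=
      Finset.sum_Icc_succ_top (by omega) _
    have hse : ∑ j ∈ Finset.Icc 1 (i+1), a (2*j)
        = (∑ j ∈ Finset.Icc 1 i, a (2*j)) + a (2*(i+1)) :=
      Finset.sum_Icc_succ_top (by omega) _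
    have e1 : C (2*(i+1)) = max (C (2*i) + U) (C (2*i+1)) + s (2*(i+1)) := by
      have h := hrec (2*(i+1)) (by omega) (by omega)
      have h2 : 2*(i+1) - 2 = 2*i := by omega
      have h3 : 2*(i+1) - 1 = 2*i+1 := by omega
      rwa [h2, h3] at h
    have e2 : C (2*(i+1)+1) = max (C (2*i+1) + U) (C (2*(i+1))) + s (2*(i+1)+1) := by
      have h := hrec (2*(i+1)+1) (by omega) (by omega)
      have h2 : 2*(i+1)+1 - 2 = 2*i+1 := by omega
      have h3 : 2*(i+1)+1 - 1 = 2*(i+1) := by omega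
      rwa [h2, h3] at h
    have hsv : s (2*(i+1)) = a (2*(i+1)-1) := hseven (i+1) (by omega) him
    have hsd : s (2*(i+1)+1) = a (2*(i+1)) := hsodd (i+1) (by omega) him
    have hSnonneg : 0 ≤ ∑ j ∈ Finset.Icc 1 i, a (2*j) :=
      Finset.sum_nonneg fun j _ => ha _
    have key1 : C (2*(i+1)) = ((i:ℝ)) * U + ∑ j ∈ Finset.Icc 1 (i+1), a (2*j-1) := by
      rw [e1, ih1, ih2, hsv, hso, max_eq_left (by linarith [hpi.1])]
      ring
    have key2 : C (2*(i+1)+1) = ((i:ℝ)+1) * U + ∑ j ∈ Finset.Icc 1 (i+1), a (2*j) := by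
      rw [e2, ih2, key1, hsd, hse, hso]
      rw [max_eq_left (by nlinarith [hpi1.2, hso])]
      ring
    push_cast
    constructor
    · rw [key1]; ring_nf
    · rw [key2]
end

section
/- Let a_1, …, a_{2m} be positive integers admitting a partition into two m-element subsets of equal sum U = (1/2)∑ a_j. Then there exists an ordering a_{[1]}, …, a_{[2m]} such that {a_{[2j-1]}} and {a_{[2j]}} are the two subsets, a_{[1]} ≥ a_{[3]} ≥ ⋯ ≥ a_{[2m-1]}, a_{[2]} ≤ a_{[4]} ≤ ⋯ ≤ a_{[2m]}, and for every 1 ≤ i ≤ m: ∑_{j=1}^i a_{[2j]} ≤ ∑_{j=1}^i a_{[2j-1]}. -/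
private lemma pairwise_mul_sum_le (l1 l2 : List ℤ) (h : ∀ x ∈ l1, ∀ y ∈ l2, y ≤ x) :
    (l1.length : ℤ) * l2.sum ≤ (l2.length : ℤ) * l1.sum := by
  induction l1 with
  | nil => simp
  | cons x t ih =>
    have hx : l2.sum ≤ (l2.length : ℤ) * x := by
      have := List.sum_le_card_nsmul l2 x (fun y hy => h x (by simp) y hy)
      simpa [nsmul_eq_mul] using this
    have ht := ih (fun z hz y hy => h z (by simp [hz]) y hy)
    simp only [List.length_cons, List.sum_cons]
    push_cast
    nlinarith [ht, hx]

private lemma avg_take_ge (l : List ℤ) (hs : l.Pairwise (fun x y => y ≤ x)) (i : ℕ)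
    (hi : i ≤ l.length) : (i : ℤ) * l.sum ≤ (l.length : ℤ) * (l.take i).sum := by
  have hsplit : l.take i ++ l.drop i = l := List.take_append_drop i l
  have hpw : ∀ x ∈ l.take i, ∀ y ∈ l.drop i, y ≤ x := by
    have := (List.pairwise_append.mp (by rw [hsplit]; exact hs)).2.2
    exact fun x hx y hy => this x hx y hy
  have key := pairwise_mul_sum_le (l.take i) (l.drop i) hpw
  have hlt : (l.take i).length = i := List.length_take_of_le hi
  have hld : ((l.drop i).length : ℤ) = (l.length : ℤ) - i := by
    rw [List.length_drop]; omega
  have hsum : l.sum = (l.take i).sum + (l.drop i).sum := by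
    conv_lhs => rw [← hsplit]
    rw [List.sum_append]
  rw [hlt] at key
  rw [hld] at key
  nlinarith [key]

private lemma avg_take_le (l : List ℤ) (hs : l.Pairwise (fun x y => x ≤ y)) (i : ℕ)
    (hi : i ≤ l.length) : (l.length : ℤ) * (l.take i).sum ≤ (i : ℤ) * l.sum := by
  have hsplit : l.take i ++ l.drop i = l := List.take_append_drop i l
  have hpw : ∀ x ∈ l.drop i, ∀ y ∈ l.take i, y ≤ x := by
    have := (List.pairwise_append.mp (by rw [hsplit]; exact hs)).2.2
    exact fun x hx y hy => this y hy x hx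
  have key := pairwise_mul_sum_le (l.drop i) (l.take i) hpw
  have hlt : (l.take i).length = i := List.length_take_of_le hi
  have hld : ((l.drop i).length : ℤ) = (l.length : ℤ) - i := by
    rw [List.length_drop]; omega
  have hsum : l.sum = (l.take i).sum + (l.drop i).sum := by
    conv_lhs => rw [← hsplit]
    rw [List.sum_append]
  rw [hlt] at key
  rw [hld] at key
  nlinarith [key]

private lemma sum_range_getD (l : List ℤ) (i : ℕ) (hi : i ≤ l.length) :
    ∑ k ∈ Finset.range i, l.getD k 0 = (l.take i).sum := by
  induction i with
  | zero => simp
  | succ n ih =>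
    have hn : n < l.length := hi
    rw [Finset.sum_range_succ, ih (le_of_lt hn), List.take_succ,
      List.sum_append]
    simp [List.getElem?_eq_getElem hn]

theorem stmt_14 (m : ℕ) (hm : 1 ≤ m) (U : ℤ) (a : ℕ → ℤ)
    (hpos : ∀ j ∈ Finset.Icc 1 (2 * m), 0 < a j)
    (hsum : ∑ j ∈ Finset.Icc 1 (2 * m), a j = 2 * U)
    (P : Finset ℕ) (hP : P ⊆ Finset.Icc 1 (2 * m)) (hPcard : P.card = m)
    (hPsum : ∑ j ∈ P, a j = U) :
    ∃ π : ℕ → ℕ, Set.BijOn π (Set.Icc 1 (2 * m)) (Set.Icc 1 (2 * m)) ∧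
      Finset.image (fun j => π (2 * j - 1)) (Finset.Icc 1 m) = P ∧
      Finset.image (fun j => π (2 * j)) (Finset.Icc 1 m) = Finset.Icc 1 (2 * m) \ P ∧
      (∀ j, 1 ≤ j → j < m → a (π (2 * (j + 1) - 1)) ≤ a (π (2 * j - 1))) ∧
      (∀ j, 1 ≤ j → j < m → a (π (2 * j)) ≤ a (π (2 * (j + 1)))) ∧
      (∀ i, 1 ≤ i → i ≤ m →
        ∑ j ∈ Finset.Icc 1 i, a (π (2 * j)) ≤ ∑ j ∈ Finset.Icc 1 i, a (π (2 * j - 1))) := by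
  classical
  set Q : Finset ℕ := Finset.Icc 1 (2 * m) \ P with hQdef
  have hIccCard : (Finset.Icc 1 (2 * m)).card = 2 * m := by
    rw [Nat.card_Icc]; omega
  have hQcard : Q.card = m := by
    rw [hQdef, Finset.card_sdiff_of_subset hP, hIccCard, hPcard]; omega
  have hQsum : ∑ j ∈ Q, a j = U := by
    have := Finset.sum_sdiff (f := a) hP
    rw [hPsum, hsum] at this
    linarith
  -- sorted lists
  set lp : List ℕ := P.toList.mergeSort (fun x y => decide (a y ≤ a x)) with hlp
  set lq : List ℕ := Q.toList.mergeSort (fun x y => decide (a x ≤ a y)) with hlq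
  have hlp_perm : List.Perm lp P.toList := List.mergeSort_perm _ _
  have hlq_perm : List.Perm lq Q.toList := List.mergeSort_perm _ _
  have hlp_len : lp.length = m := by rw [hlp_perm.length_eq, Finset.length_toList, hPcard]
  have hlq_len : lq.length = m := by rw [hlq_perm.length_eq, Finset.length_toList, hQcard]
  have hlp_mem : ∀ x, x ∈ lp ↔ x ∈ P := by
    intro x; rw [hlp_perm.mem_iff, Finset.mem_toList]
  have hlq_mem : ∀ x, x ∈ lq ↔ x ∈ Q := by
    intro x; rw [hlq_perm.mem_iff, Finset.mem_toList]
  have hlp_sorted : lp.Pairwise (fun x y => a y ≤ a x) := by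
    have := List.pairwise_mergeSort (le := fun x y => decide (a y ≤ a x))
      (fun x y z h1 h2 => by simp at *; linarith)
      (fun x y => by simp [le_total]) P.toList
    exact this.imp (by simp)
  have hlq_sorted : lq.Pairwise (fun x y => a x ≤ a y) := by
    have := List.pairwise_mergeSort (le := fun x y => decide (a x ≤ a y))
      (fun x y z h1 h2 => by simp at *; linarith)
      (fun x y => by simp [le_total]) Q.toList
    exact this.imp (by simp)
  have hlp_sum : (lp.map a).sum = U := by
    rw [(hlp_perm.map a).sum_eq, Finset.sum_map_toList, hPsum]
  have hlq_sum : (lq.map a).sum = U := by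
    rw [(hlq_perm.map a).sum_eq, Finset.sum_map_toList, hQsum]
  -- the permutation
  set π : ℕ → ℕ := fun n => if n % 2 = 1 then lp.getD ((n - 1) / 2) 0 else lq.getD (n / 2 - 1) 0
    with hπ
  have hodd : ∀ j, 1 ≤ j → π (2 * j - 1) = lp.getD (j - 1) 0 := by
    intro j hj
    have h1 : (2 * j - 1) % 2 = 1 := by omega
    have h2 : (2 * j - 1 - 1) / 2 = j - 1 := by omega
    simp [hπ, h1, h2]
  have heven : ∀ j, 1 ≤ j → π (2 * j) = lq.getD (j - 1) 0 := by
    intro j hj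
    have h1 : (2 * j) % 2 = 0 := by omega
    have h2 : 2 * j / 2 - 1 = j - 1 := by omega
    simp [hπ, h1, h2]
  have hlp_getD : ∀ k (hk : k < lp.length), lp.getD k 0 = lp[k] :=
    fun k hk => List.getD_eq_getElem lp 0 hk
  have hlq_getD : ∀ k (hk : k < lq.length), lq.getD k 0 = lq[k] :=
    fun k hk => List.getD_eq_getElem lq 0 hk
  -- image facts
  have himP : Finset.image (fun j => π (2 * j - 1)) (Finset.Icc 1 m) = P := by
    ext x
    simp only [Finset.mem_image, Finset.mem_Icc]
    constructor
    · rintro ⟨j, ⟨hj1, hj2⟩, rfl⟩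
      rw [hodd j hj1, hlp_getD (j - 1) (by omega)]
      rw [← hlp_mem]
      exact List.getElem_mem _
    · intro hx
      obtain ⟨k, hk, hkx⟩ := List.mem_iff_getElem.mp ((hlp_mem x).mpr hx)
      refine ⟨k + 1, ⟨by omega, by omega⟩, ?_⟩
      rw [hodd (k + 1) (by omega)]
      have h1 : k + 1 - 1 = k := by omega
      rw [h1, hlp_getD k (by omega)]; exact hkx
  have himQ : Finset.image (fun j => π (2 * j)) (Finset.Icc 1 m) = Q := by
    ext x
    simp only [Finset.mem_image, Finset.mem_Icc]
    constructor
    · rintro ⟨j, ⟨hj1, hj2⟩, rfl⟩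
      rw [heven j hj1, hlq_getD (j - 1) (by omega)]
      rw [← hlq_mem]
      exact List.getElem_mem _
    · intro hx
      obtain ⟨k, hk, hkx⟩ := List.mem_iff_getElem.mp ((hlq_mem x).mpr hx)
      refine ⟨k + 1, ⟨by omega, by omega⟩, ?_⟩
      rw [heven (k + 1) (by omega)]
      have h1 : k + 1 - 1 = k := by omega
      rw [h1, hlq_getD k (by omega)]; exact hkx
  -- BijOn
  have hmapsTo : Set.MapsTo π (Set.Icc 1 (2 * m)) (Set.Icc 1 (2 * m)) := by
    intro n hn
    simp only [Set.mem_Icc] at hn ⊢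
    by_cases h : n % 2 = 1
    · obtain ⟨j, hj1, hj2, rfl⟩ : ∃ j, 1 ≤ j ∧ j ≤ m ∧ n = 2 * j - 1 :=
        ⟨(n + 1) / 2, by omega, by omega, by omega⟩
      rw [hodd j hj1, hlp_getD (j - 1) (by omega)]
      have hmem : lp[j - 1]'(by omega) ∈ P := (hlp_mem _).mp (List.getElem_mem _)
      have := hP hmem
      simp only [Finset.mem_Icc] at this; exact this
    · obtain ⟨j, hj1, hj2, rfl⟩ : ∃ j, 1 ≤ j ∧ j ≤ m ∧ n = 2 * j :=
        ⟨n / 2, by omega, by omega, by omega⟩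
      rw [heven j hj1, hlq_getD (j - 1) (by omega)]
      have hmem : lq[j - 1]'(by omega) ∈ Q := (hlq_mem _).mp (List.getElem_mem _)
      have hsub : Q ⊆ Finset.Icc 1 (2 * m) := Finset.sdiff_subset
      have := hsub hmem
      simp only [Finset.mem_Icc] at this; exact this
  have hsurjOn : Set.SurjOn π (Set.Icc 1 (2 * m)) (Set.Icc 1 (2 * m)) := by
    intro x hx
    simp only [Set.mem_Icc] at hx
    by_cases hxP : x ∈ P
    · obtain ⟨k, hk, hkx⟩ := List.mem_iff_getElem.mp ((hlp_mem x).mpr hxP)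
      refine ⟨2 * (k + 1) - 1, ?_, ?_⟩
      · simp only [Set.mem_Icc]; omega
      · rw [hodd (k + 1) (by omega), Nat.add_sub_cancel, hlp_getD k (by omega)]
        exact hkx
    · have hxQ : x ∈ Q := by
        simp only [hQdef, Finset.mem_sdiff, Finset.mem_Icc]; exact ⟨hx, hxP⟩
      obtain ⟨k, hk, hkx⟩ := List.mem_iff_getElem.mp ((hlq_mem x).mpr hxQ)
      refine ⟨2 * (k + 1), ?_, ?_⟩
      · simp only [Set.mem_Icc]; omega
      · rw [heven (k + 1) (by omega), Nat.add_sub_cancel, hlq_getD k (by omega)]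
        exact hkx
  have hbij : Set.BijOn π (Set.Icc 1 (2 * m)) (Set.Icc 1 (2 * m)) :=
    (Set.Finite.surjOn_iff_bijOn_of_mapsTo (Set.finite_Icc _ _) hmapsTo).mp hsurjOn
  refine ⟨π, hbij, himP, by rw [himQ, hQdef], ?_, ?_, ?_⟩
  · -- p decreasing
    intro j hj1 hj2
    rw [hodd (j + 1) (by omega), hodd j hj1, Nat.add_sub_cancel, hlp_getD j (by omega),
      hlp_getD (j - 1) (by omega)]
    have := List.pairwise_iff_getElem.mp hlp_sorted (j - 1) j (by omega) (by omega) (by omega)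
    exact this
  · -- q increasing
    intro j hj1 hj2
    rw [heven (j + 1) (by omega), heven j hj1, Nat.add_sub_cancel, hlq_getD j (by omega),
      hlq_getD (j - 1) (by omega)]
    have := List.pairwise_iff_getElem.mp hlq_sorted (j - 1) j (by omega) (by omega) (by omega)
    exact this
  · -- partial sums
    intro i hi1 hi2
    have hreP : ∑ j ∈ Finset.Icc 1 i, a (π (2 * j - 1)) = ((lp.map a).take i).sum := by
      rw [← sum_range_getD _ i (by simp [hlp_len]; omega)]
      rw [show Finset.Icc 1 i = Finset.Ico 1 (i + 1) by rfl, Finset.sum_Ico_eq_sum_range]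
      apply Finset.sum_congr rfl
      intro k hk
      simp only [Finset.mem_range] at hk
      rw [hodd (1 + k) (by omega)]
      have h1 : 1 + k - 1 = k := by omega
      rw [h1, hlp_getD k (by omega), List.getD_eq_getElem (lp.map a) 0
        (by simp [hlp_len]; omega)]
      simp
    have hreQ : ∑ j ∈ Finset.Icc 1 i, a (π (2 * j)) = ((lq.map a).take i).sum := by
      rw [← sum_range_getD _ i (by simp [hlq_len]; omega)]
      rw [show Finset.Icc 1 i = Finset.Ico 1 (i + 1) by rfl, Finset.sum_Ico_eq_sum_range]
      apply Finset.sum_congr rfl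
      intro k hk
      simp only [Finset.mem_range] at hk
      rw [heven (1 + k) (by omega)]
      have h1 : 1 + k - 1 = k := by omega
      rw [h1, hlq_getD k (by omega), List.getD_eq_getElem (lq.map a) 0
        (by simp [hlq_len]; omega)]
      simp
    rw [hreP, hreQ]
    have hpP : (lp.map a).Pairwise (fun x y => y ≤ x) := by
      rw [List.pairwise_map]; exact hlp_sorted
    have hpQ : (lq.map a).Pairwise (fun x y => x ≤ y) := by
      rw [List.pairwise_map]; exact hlq_sorted
    have h1 := avg_take_ge (lp.map a) hpP i (by simp [hlp_len]; omega)
    have h2 := avg_take_le (lq.map a) hpQ i (by simp [hlq_len]; omega)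
    rw [hlp_sum] at h1
    rw [hlq_sum] at h2
    simp only [List.length_map, hlp_len] at h1
    simp only [List.length_map, hlq_len] at h2
    have hm' : (0 : ℤ) < m := by exact_mod_cast hm
    have := h2.trans h1
    exact le_of_mul_le_mul_left this hm'
end
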